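/- For a T0 space X, the following are equivalent: (1) X is ω*-well-filtered; (2) the Smyth power space P_S(X) is an ω*-d-space; (3) P_S(X) is ω*-well-filtered. -/

import Mathlib

open Topology


/-- A set is saturated if it is the intersection of all open sets containing it. -/
def IsSaturatedSet {X : Type*} [TopologicalSpace X] (A : Set X) : Prop :=
  A = ⋂₀ {U : Set X | IsOpen U ∧ A ⊆ U}

/-- The nonempty compact saturated subsets of `X`. -/
def KSet (X : Type*) [TopologicalSpace X] :=
  {K : Set X // K.Nonempty ∧ IsCompact K ∧ IsSaturatedSet K}

/-- The upper Vietoris topology on `K(X)`, with basic open sets `□U = {K : K ⊆ U}`;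
this gives the Smyth power space `P_S(X)`. -/
def upperVietoris (X : Type*) [TopologicalSpace X] : TopologicalSpace (KSet X) :=
  TopologicalSpace.generateFrom
    {s : Set (KSet X) | ∃ U : Set X, IsOpen U ∧ s = {K : KSet X | K.1 ⊆ U}}

/-- A family of sets is countably-filtered: nonempty, and every nonempty countable
subfamily has a member of the family contained in all its members. -/
def CountablyFiltered {X : Type*} (𝒦 : Set (Set X)) : Prop :=
  𝒦.Nonempty ∧ ∀ S ⊆ 𝒦, S.Countable → S.Nonempty → ∃ K ∈ 𝒦, ∀ J ∈ S, K ⊆ J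

/-- `X` is ω*-well-filtered. -/
def OmegaStarWF (X : Type*) [TopologicalSpace X] : Prop :=
  ∀ 𝒦 : Set (Set X), (∀ K ∈ 𝒦, K.Nonempty ∧ IsCompact K ∧ IsSaturatedSet K) →
    CountablyFiltered 𝒦 → ∀ U : Set X, IsOpen U → ⋂₀ 𝒦 ⊆ U → ∃ K ∈ 𝒦, K ⊆ U

/-- A nonempty subset `D` is countably-directed for the specialization order. -/
def CDspec {X : Type*} [TopologicalSpace X] (D : Set X) : Prop :=
  D.Nonempty ∧ ∀ S ⊆ D, S.Countable → S.Nonempty → ∃ b ∈ D, ∀ s ∈ S, s ∈ closure {b}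

/-- `X` is an ω*-d-space: the closure of every countably-directed set has a generic point. -/
def IsOmegaStarDSpace (X : Type*) [TopologicalSpace X] : Prop :=
  ∀ D : Set X, CDspec D → ∃ x : X, closure D = closure {x}

section Aux

variable {X : Type*} [TopologicalSpace X]

/-- The basic open box of the upper Vietoris topology. -/
def KBox (U : Set X) : Set (KSet X) := {K : KSet X | K.1 ⊆ U}

lemma isOpen_KBox {U : Set X} (hU : IsOpen U) :
    IsOpen[upperVietoris X] (KBox U) :=
  TopologicalSpace.GenerateOpen.basic _ ⟨U, hU, rfl⟩

/-- The boxes form a basis of the upper Vietoris topology. -/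
lemma KSet_basis {𝒪 : Set (KSet X)} (h : IsOpen[upperVietoris X] 𝒪) :
    ∀ K ∈ 𝒪, ∃ U : Set X, IsOpen U ∧ K.1 ⊆ U ∧ KBox U ⊆ 𝒪 := by
  have h' : TopologicalSpace.GenerateOpen
      {s : Set (KSet X) | ∃ U : Set X, IsOpen U ∧ s = {K : KSet X | K.1 ⊆ U}} 𝒪 := h
  clear h
  induction h' with
  | basic s hs =>
      obtain ⟨U, hU, rfl⟩ := hs
      exact fun K hK => ⟨U, hU, hK, fun K' hK' => hK'⟩
  | univ => exact fun K _ => ⟨Set.univ, isOpen_univ, Set.subset_univ _, fun K' _ => trivial⟩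
  | inter s t hs ht ihs iht =>
      intro K hK
      obtain ⟨U, hU, hKU, hUs⟩ := ihs K hK.1
      obtain ⟨V, hV, hKV, hVt⟩ := iht K hK.2
      exact ⟨U ∩ V, hU.inter hV, Set.subset_inter hKU hKV,
        fun K' hK' => ⟨hUs fun x hx => (hK' hx).1, hVt fun x hx => (hK' hx).2⟩⟩
  | sUnion S hS ih =>
      intro K hK
      obtain ⟨s, hs, hKs⟩ := hK
      obtain ⟨U, hU, hKU, hUs⟩ := ih s hs K hKs
      exact ⟨U, hU, hKU, hUs.trans (Set.subset_sUnion_of_mem hs)⟩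

/-- Saturated sets are upward closed for specialization. -/
lemma IsSaturatedSet.mem_of_specle {A : Set X} (h : IsSaturatedSet A) {x y : X}
    (hx : x ∈ A) (hxy : x ∈ closure {y}) : y ∈ A := by
  rw [h]
  refine Set.mem_sInter.mpr fun U hU => ?_
  obtain ⟨z, hzU, hz⟩ := mem_closure_iff.mp hxy U hU.1 (hU.2 hx)
  rw [Set.mem_singleton_iff] at hz
  exact hz ▸ hzU

/-- Characterization of closures of points in the Smyth power space. -/
lemma mem_closure_singleton_KSet (K K' : KSet X) :
    K' ∈ @closure _ (upperVietoris X) {K} ↔ K.1 ⊆ K'.1 := by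
  letI := upperVietoris X
  constructor
  · intro h x hxK
    by_contra hx
    have hopen : IsOpen ((closure {x})ᶜ) := isClosed_closure.isOpen_compl
    have hK' : K' ∈ KBox ((closure {x})ᶜ) := by
      intro y hy
      exact fun hyc => hx (K'.2.2.2.mem_of_specle hy hyc)
    obtain ⟨L, hL, hLK⟩ := mem_closure_iff.mp h _ (isOpen_KBox hopen) hK'
    rw [Set.mem_singleton_iff] at hLK
    subst hLK
    exact hL hxK (subset_closure (Set.mem_singleton x))
  · intro hsub
    rw [mem_closure_iff]
    intro o ho hK'o
    obtain ⟨U, hU, hK'U, hbox⟩ := KSet_basis ho K' hK'o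
    exact ⟨K, hbox (hsub.trans hK'U), rfl⟩

/-- Intersections of countably-filtered families of nonempty compact saturated sets in an
ω*-well-filtered space are nonempty, compact and saturated. -/
lemma sInter_ncs (hwf : OmegaStarWF X) {ℰ : Set (Set X)}
    (hm : ∀ A ∈ ℰ, A.Nonempty ∧ IsCompact A ∧ IsSaturatedSet A)
    (hcf : CountablyFiltered ℰ) :
    (⋂₀ ℰ).Nonempty ∧ IsCompact (⋂₀ ℰ) ∧ IsSaturatedSet (⋂₀ ℰ) := by
  refine ⟨?_, ?_, ?_⟩
  · by_contra h
    rw [Set.not_nonempty_iff_eq_empty] at h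
    obtain ⟨K, hK, hK0⟩ := hwf ℰ hm hcf ∅ isOpen_empty (by rw [h])
    exact (hm K hK).1.ne_empty (Set.subset_empty_iff.mp hK0)
  · apply isCompact_of_finite_subcover
    intro ι U hU hcov
    obtain ⟨A, hA, hAU⟩ := hwf ℰ hm hcf (⋃ i, U i) (isOpen_iUnion hU) hcov
    obtain ⟨t, ht⟩ := (hm A hA).2.1.elim_finite_subcover U hU hAU
    exact ⟨t, (Set.sInter_subset_of_mem hA).trans ht⟩
  · apply Set.Subset.antisymm
    · exact Set.subset_sInter fun U hU => hU.2
    · intro x hx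
      refine Set.mem_sInter.mpr fun A hA => ?_
      rw [(hm A hA).2.2]
      refine Set.mem_sInter.mpr fun U hU => ?_
      exact hx U ⟨hU.1, (Set.sInter_subset_of_mem hA).trans hU.2⟩

/-- Unions of nonempty compact families in the Smyth power space are nonempty compact
saturated. -/
lemma union_ncs {𝒜 : Set (KSet X)} (hne : 𝒜.Nonempty)
    (hcomp : @IsCompact _ (upperVietoris X) 𝒜) :
    (⋃ K ∈ 𝒜, (K : KSet X).1).Nonempty ∧ IsCompact (⋃ K ∈ 𝒜, (K : KSet X).1) ∧
      IsSaturatedSet (⋃ K ∈ 𝒜, (K : KSet X).1) := by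
  letI := upperVietoris X
  classical
  refine ⟨?_, ?_, ?_⟩
  · obtain ⟨K, hK⟩ := hne
    obtain ⟨x, hx⟩ := K.2.1
    exact ⟨x, Set.mem_biUnion hK hx⟩
  · apply isCompact_of_finite_subcover
    intro ι U hU hcov
    have hsel : ∀ K : KSet X, K ∈ 𝒜 → ∃ t : Finset ι, K.1 ⊆ ⋃ i ∈ t, U i := fun K hK =>
      K.2.2.1.elim_finite_subcover U hU fun x hx => hcov (Set.mem_biUnion hK hx)
    choose t ht using hsel
    have hcov2 : 𝒜 ⊆ ⋃ s : Finset ι, KBox (⋃ i ∈ s, U i) := fun K hK =>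
      Set.mem_iUnion.mpr ⟨t K hK, ht K hK⟩
    obtain ⟨T, hT⟩ := hcomp.elim_finite_subcover _
      (fun s : Finset ι => isOpen_KBox (isOpen_biUnion fun i _ => hU i)) hcov2
    refine ⟨T.biUnion id, ?_⟩
    intro x hx
    obtain ⟨K, hK, hxK⟩ := Set.mem_iUnion₂.mp hx
    obtain ⟨s, hsT, hKs⟩ := Set.mem_iUnion₂.mp (hT hK)
    obtain ⟨i, hi, hxi⟩ := Set.mem_iUnion₂.mp (hKs hxK)
    exact Set.mem_biUnion (Finset.mem_biUnion.mpr ⟨s, hsT, hi⟩) hxi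
  · apply Set.Subset.antisymm
    · exact Set.subset_sInter fun U hU => hU.2
    · intro z hz
      by_contra hzn
      have hW : ∀ K : KSet X, K ∈ 𝒜 → ∃ W : Set X, IsOpen W ∧ K.1 ⊆ W ∧ z ∉ W := by
        intro K hK
        have hzK : z ∉ K.1 := fun h => hzn (Set.mem_biUnion hK h)
        by_contra hcon
        push_neg at hcon
        apply hzK
        rw [K.2.2.2]
        exact Set.mem_sInter.mpr fun W hW => hcon W hW.1 hW.2
      choose W hWo hWs hWz using hW
      have hzW : z ∈ ⋃ K, ⋃ hK : K ∈ 𝒜, W K hK := by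
        refine hz _ ⟨isOpen_iUnion fun K => isOpen_iUnion fun hK => hWo K hK, ?_⟩
        intro x hx
        obtain ⟨K, hK, hxK⟩ := Set.mem_iUnion₂.mp hx
        exact Set.mem_iUnion₂.mpr ⟨K, hK, hWs K hK hxK⟩
      obtain ⟨K, hK, hzK⟩ := Set.mem_iUnion₂.mp hzW
      exact hWz K hK hzK

/-- ω*-well-filtered spaces are ω*-d-spaces. -/
lemma wf_to_dspace {Y : Type*} [TopologicalSpace Y] (hwf : OmegaStarWF Y) :
    IsOmegaStarDSpace Y := by
  intro D hD
  classical
  set up : Y → Set Y := fun d => {z | d ∈ closure {z}} with hup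
  have hupmem : ∀ d, d ∈ up d := fun d => subset_closure (Set.mem_singleton d)
  have hupsub : ∀ (d : Y) (V : Set Y), IsOpen V → d ∈ V → up d ⊆ V := by
    intro d V hV hdV z hz
    obtain ⟨w, hwV, hw⟩ := mem_closure_iff.mp hz V hV hdV
    rw [Set.mem_singleton_iff] at hw
    exact hw ▸ hwV
  have hncs : ∀ d : Y, (up d).Nonempty ∧ IsCompact (up d) ∧ IsSaturatedSet (up d) := by
    intro d
    refine ⟨⟨d, hupmem d⟩, ?_, ?_⟩
    · apply isCompact_of_finite_subcover
      intro ι U hU hcov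
      obtain ⟨i, hi⟩ := Set.mem_iUnion.mp (hcov (hupmem d))
      exact ⟨{i}, fun z hz =>
        Set.mem_biUnion (Finset.mem_singleton_self i) (hupsub d (U i) (hU i) hi hz)⟩
    · apply Set.Subset.antisymm
      · exact Set.subset_sInter fun U hU => hU.2
      · intro x hx
        show d ∈ closure {x}
        rw [mem_closure_iff]
        intro V hV hdV
        exact ⟨x, hx V ⟨hV, hupsub d V hV hdV⟩, rfl⟩
  set 𝒦 : Set (Set Y) := up '' D with h𝒦
  have hcf : CountablyFiltered 𝒦 := by
    obtain ⟨d0, hd0⟩ := hD.1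
    refine ⟨⟨up d0, ⟨d0, hd0, rfl⟩⟩, ?_⟩
    intro S hS hSc hSne
    have hex : ∀ s : S, ∃ d ∈ D, up d = (s : Set Y) := fun s => hS s.2
    choose g hg1 hg2 using hex
    have : Countable S := hSc.to_subtype
    have : Nonempty S := hSne.to_subtype
    obtain ⟨b, hb, hble⟩ := hD.2 (Set.range g) (by rintro x ⟨s, rfl⟩; exact hg1 s)
      (Set.countable_range g) (Set.range_nonempty g)
    refine ⟨up b, ⟨b, hb, rfl⟩, ?_⟩
    intro s hs
    have hgb : g ⟨s, hs⟩ ∈ closure {b} := hble _ ⟨⟨s, hs⟩, rfl⟩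
    rw [← show up (g ⟨s, hs⟩) = s from hg2 ⟨s, hs⟩]
    intro z hz
    have hbz : b ∈ closure {z} := hz
    show g ⟨s, hs⟩ ∈ closure {z}
    exact closure_minimal (Set.singleton_subset_iff.mpr hbz) isClosed_closure hgb
  have hnot : ¬ (⋂₀ 𝒦 ⊆ (closure D)ᶜ) := by
    intro hsub
    obtain ⟨K, hKmem, hKU⟩ := hwf 𝒦 (by rintro K ⟨d, hd, rfl⟩; exact hncs d) hcf _
      isClosed_closure.isOpen_compl hsub
    obtain ⟨d, hd, rfl⟩ := hKmem
    exact hKU (hupmem d) (subset_closure hd)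
  rw [Set.not_subset] at hnot
  obtain ⟨x, hx1, hx2⟩ := hnot
  rw [Set.mem_compl_iff, not_not] at hx2
  refine ⟨x, Set.Subset.antisymm ?_ ?_⟩
  · refine closure_minimal ?_ isClosed_closure
    intro d hd
    exact hx1 (up d) ⟨d, hd, rfl⟩
  · exact closure_minimal (Set.singleton_subset_iff.mpr hx2) isClosed_closure

/-- If the Smyth power space is an ω*-d-space, then `X` is ω*-well-filtered. -/
lemma two_to_one (hd : @IsOmegaStarDSpace (KSet X) (upperVietoris X)) : OmegaStarWF X := by
  letI := upperVietoris X
  intro 𝒦 hm hcf U hU hsub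
  classical
  set D : Set (KSet X) := {K : KSet X | K.1 ∈ 𝒦} with hD
  have hDcd : CDspec D := by
    obtain ⟨A, hA⟩ := hcf.1
    refine ⟨⟨⟨A, hm A hA⟩, hA⟩, ?_⟩
    intro S hS hSc hSne
    have hsub2 : Subtype.val '' S ⊆ 𝒦 := by rintro x ⟨K, hK, rfl⟩; exact hS hK
    obtain ⟨B, hB, hBle⟩ := hcf.2 _ hsub2 (hSc.image _) (hSne.image _)
    refine ⟨⟨B, hm B hB⟩, hB, ?_⟩
    intro s hs
    refine (mem_closure_singleton_KSet (⟨B, hm B hB⟩ : KSet X) s).mpr ?_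
    exact hBle s.1 ⟨s, hs, rfl⟩
  obtain ⟨K0, hK0⟩ := hd D hDcd
  have hglb : ∀ K ∈ D, K0.1 ⊆ (K : KSet X).1 := by
    intro K hK
    have hKc : K ∈ closure {K0} := hK0 ▸ subset_closure hK
    exact (mem_closure_singleton_KSet K0 K).mp hKc
  have hK0U : K0.1 ⊆ U := by
    intro x hx
    refine hsub (Set.mem_sInter.mpr fun A hA => ?_)
    exact hglb ⟨A, hm A hA⟩ hA hx
  have hK0cl : K0 ∈ closure D := by rw [hK0]; exact subset_closure rfl
  obtain ⟨K, hKbox, hKD⟩ := mem_closure_iff.mp hK0cl (KBox U) (isOpen_KBox hU) hK0U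
  exact ⟨K.1, hKD, hKbox⟩

/-- A finite nonempty subfamily of a chain of sets has a least element. -/
lemma chain_least {α : Type*} {c : Set (Set α)} (hchain : IsChain (· ⊆ ·) c)
    (t : Finset (Set α)) (ht : ↑t ⊆ c) (htne : t.Nonempty) :
    ∃ C ∈ t, ∀ C' ∈ t, C ⊆ C' := by
  obtain ⟨m, hm, hmin⟩ := t.exists_minimal htne
  refine ⟨m, hm, fun C' hC' => ?_⟩
  rcases eq_or_ne C' m with rfl | hne
  · exact subset_rfl
  rcases hchain (ht hC') (ht hm) hne with h | h
  · exact absurd (hmin hC' h) (fun h' => hne (Set.Subset.antisymm h h'))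
  · exact h

/-- If `X` is ω*-well-filtered, so is its Smyth power space. -/
lemma one_to_three (hwf : OmegaStarWF X) : @OmegaStarWF (KSet X) (upperVietoris X) := by
  letI := upperVietoris X
  intro 𝔎 hmem hcf 𝒰 h𝒰 hsub
  classical
  by_contra hno
  push_neg at hno
  have hA : ∀ Q ∈ 𝔎, (Q \ 𝒰).Nonempty := by
    intro Q hQ
    rw [Set.diff_nonempty]
    exact hno Q hQ
  have hAcomp : ∀ Q ∈ 𝔎, IsCompact (Q \ 𝒰) := fun Q hQ =>
    (hmem Q hQ).2.1.inter_right h𝒰.isClosed_compl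
  set S : Set (Set (KSet X)) :=
    {C | IsClosed C ∧ C ⊆ 𝒰ᶜ ∧ ∀ Q ∈ 𝔎, (C ∩ (Q \ 𝒰)).Nonempty} with hSdef
  have hzorn : ∃ C, Minimal (· ∈ S) C := by
    apply zorn_superset
    intro c hc hchain
    rcases Set.eq_empty_or_nonempty c with rfl | hcne
    · refine ⟨𝒰ᶜ, ⟨h𝒰.isClosed_compl, subset_rfl, ?_⟩, by simp⟩
      intro Q hQ
      obtain ⟨K, hK⟩ := hA Q hQ
      exact ⟨K, hK.2, hK⟩
    · refine ⟨⋂₀ c, ⟨isClosed_sInter fun C hC => (hc hC).1, ?_, ?_⟩,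
        fun s hs => Set.sInter_subset_of_mem hs⟩
      · obtain ⟨C0, hC0⟩ := hcne
        exact (Set.sInter_subset_of_mem hC0).trans (hc hC0).2.1
      · intro Q hQ
        have hfip : ∀ u : Finset c, ((Q \ 𝒰) ∩ ⋂ C ∈ u, (C : Set (KSet X))).Nonempty := by
          intro u
          rcases u.eq_empty_or_nonempty with rfl | hune
          · simpa using hA Q hQ
          · have htne : (u.image (fun C : c => (C : Set (KSet X)))).Nonempty :=
              hune.image _
            have htsub : ↑(u.image (fun C : c => (C : Set (KSet X)))) ⊆ c := by
              intro x hx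
              obtain ⟨C', _, rfl⟩ := Finset.mem_image.mp hx
              exact C'.2
            obtain ⟨C, hCt, hCle⟩ := chain_least hchain _ htsub htne
            have hCc : C ∈ c := htsub hCt
            obtain ⟨K, hKC, hKQ⟩ := (hc hCc).2.2 Q hQ
            refine ⟨K, hKQ, Set.mem_iInter₂.mpr fun C' hC' => ?_⟩
            exact hCle (C' : Set (KSet X)) (Finset.mem_image_of_mem _ hC') hKC
        have hint := (hAcomp Q hQ).inter_iInter_nonempty
          (fun C : c => (C : Set (KSet X))) (fun C => (hc C.2).1) hfip
        obtain ⟨K, hK1, hK2⟩ := hint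
        refine ⟨K, Set.mem_sInter.mpr fun C hC => ?_, hK1⟩
        exact Set.mem_iInter.mp hK2 ⟨C, hC⟩
  obtain ⟨C, hC⟩ := hzorn
  obtain ⟨hCclosed, hCU, hCmeet⟩ := hC.1
  set E : Set (KSet X) → Set X := fun Q => ⋃ K ∈ C ∩ (Q \ 𝒰), (K : KSet X).1 with hEdef
  have hBcomp : ∀ Q ∈ 𝔎, IsCompact (C ∩ (Q \ 𝒰)) := by
    intro Q hQ
    have heq : C ∩ (Q \ 𝒰) = Q ∩ (C ∩ 𝒰ᶜ) := by
      ext K; simp only [Set.mem_inter_iff, Set.mem_diff, Set.mem_compl_iff]; tauto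
    rw [heq]
    exact (hmem Q hQ).2.1.inter_right (hCclosed.inter h𝒰.isClosed_compl)
  have hEncs : ∀ Q ∈ 𝔎, (E Q).Nonempty ∧ IsCompact (E Q) ∧ IsSaturatedSet (E Q) :=
    fun Q hQ => union_ncs (hCmeet Q hQ) (hBcomp Q hQ)
  have hEmono : ∀ Q Q', Q ⊆ Q' → E Q ⊆ E Q' := by
    intro Q Q' hQQ x hx
    obtain ⟨K, hK, hxK⟩ := Set.mem_iUnion₂.mp hx
    exact Set.mem_biUnion ⟨hK.1, hQQ hK.2.1, hK.2.2⟩ hxK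
  set ℰ : Set (Set X) := E '' 𝔎 with hℰdef
  have hℰm : ∀ A ∈ ℰ, A.Nonempty ∧ IsCompact A ∧ IsSaturatedSet A := by
    rintro A ⟨Q, hQ, rfl⟩; exact hEncs Q hQ
  have hℰcf : CountablyFiltered ℰ := by
    obtain ⟨Q0, hQ0⟩ := hcf.1
    refine ⟨⟨E Q0, ⟨Q0, hQ0, rfl⟩⟩, ?_⟩
    intro T hT hTc hTne
    have hex : ∀ s : T, ∃ Q ∈ 𝔎, E Q = (s : Set X) := fun s => hT s.2
    choose g hg1 hg2 using hex
    have : Countable T := hTc.to_subtype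
    have : Nonempty T := hTne.to_subtype
    obtain ⟨Qm, hQm, hle⟩ := hcf.2 (Set.range g) (by rintro x ⟨s, rfl⟩; exact hg1 s)
      (Set.countable_range g) (Set.range_nonempty g)
    refine ⟨E Qm, ⟨Qm, hQm, rfl⟩, ?_⟩
    intro s hs
    rw [← show E (g ⟨s, hs⟩) = s from hg2 ⟨s, hs⟩]
    exact hEmono _ _ (hle _ ⟨⟨s, hs⟩, rfl⟩)
  obtain ⟨hEne, hEcomp, hEsat⟩ := sInter_ncs hwf hℰm hℰcf
  set Ehat : KSet X := ⟨⋂₀ ℰ, hEne, hEcomp, hEsat⟩ with hEhatdef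
  have hEsub : ∀ Q ∈ 𝔎, ⋂₀ ℰ ⊆ E Q := fun Q hQ => Set.sInter_subset_of_mem ⟨Q, hQ, rfl⟩
  have hEC : Ehat ∈ C := by
    rw [← hCclosed.closure_eq, mem_closure_iff]
    intro o ho hEo
    obtain ⟨U, hU, hEU, hbox⟩ := KSet_basis ho Ehat hEo
    obtain ⟨A, hAmem, hAU⟩ := hwf ℰ hℰm hℰcf U hU hEU
    obtain ⟨Q, hQ, rfl⟩ := hAmem
    obtain ⟨K, hK⟩ := hCmeet Q hQ
    exact ⟨K, hbox ((Set.subset_biUnion_of_mem hK).trans hAU), hK.1⟩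
  have hEQ : ∀ Q ∈ 𝔎, Ehat ∈ Q := by
    intro Q hQ
    by_contra hnotin
    have hsat := (hmem Q hQ).2.2
    have hexW : ∃ 𝒲, IsOpen 𝒲 ∧ Q ⊆ 𝒲 ∧ Ehat ∉ 𝒲 := by
      by_contra hcon
      push_neg at hcon
      apply hnotin
      rw [hsat]
      exact Set.mem_sInter.mpr fun 𝒲 h𝒲 => hcon 𝒲 h𝒲.1 h𝒲.2
    obtain ⟨𝒲, h𝒲o, hQ𝒲, hE𝒲⟩ := hexW
    have hq : ∀ q : {q : KSet X // q ∈ Q}, ∃ U, IsOpen U ∧ (q : KSet X).1 ⊆ U ∧ KBox U ⊆ 𝒲 :=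
      fun q => KSet_basis h𝒲o q.1 (hQ𝒲 q.2)
    choose V hVo hVq hVsub using hq
    obtain ⟨t, ht⟩ := (hmem Q hQ).2.1.elim_finite_subcover (fun q => KBox (V q))
      (fun q => isOpen_KBox (hVo q))
      (fun q hqQ => Set.mem_iUnion.mpr ⟨⟨q, hqQ⟩, hVq ⟨q, hqQ⟩⟩)
    have hempty : ∀ q ∈ t, C ∩ KBox (V q) = ∅ := by
      intro q hqt
      by_cases hall : ∀ Q' ∈ 𝔎, ((C \ KBox (V q)) ∩ (Q' \ 𝒰)).Nonempty
      · have hmem' : C \ KBox (V q) ∈ S :=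
          ⟨hCclosed.sdiff (isOpen_KBox (hVo q)), Set.diff_subset.trans hCU, hall⟩
        have hCC := hC.2 hmem' Set.diff_subset
        ext K
        simp only [Set.mem_inter_iff, Set.mem_empty_iff_false, iff_false, not_and]
        intro hKC hKb
        exact (hCC hKC).2 hKb
      · push_neg at hall
        obtain ⟨Q', hQ', hQ'empty⟩ := hall
        have hEQ' : E Q' ⊆ V q := by
          refine Set.iUnion₂_subset fun K hK => ?_
          have hKb : K ∈ KBox (V q) := by
            by_contra hKb
            have hmem2 : K ∈ (C \ KBox (V q)) ∩ (Q' \ 𝒰) := ⟨⟨hK.1, hKb⟩, hK.2⟩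
            rw [hQ'empty] at hmem2
            exact absurd hmem2 (Set.notMem_empty K)
          exact hKb
        have hEhatV : Ehat ∈ KBox (V q) := (hEsub Q' hQ').trans hEQ'
        exact (hE𝒲 (hVsub q hEhatV)).elim
    obtain ⟨K, hK⟩ := hCmeet Q hQ
    obtain ⟨q, hqt, hKb⟩ := Set.mem_iUnion₂.mp (ht hK.2.1)
    have h0 := hempty q hqt
    have : K ∈ C ∩ KBox (V q) := ⟨hK.1, hKb⟩
    rw [h0] at this
    exact absurd this (Set.notMem_empty K)
  exact hCU hEC (hsub (Set.mem_sInter.mpr hEQ))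

end Aux

/-- `X` is ω*-well-filtered iff `P_S(X)` is an ω*-d-space iff `P_S(X)` is ω*-well-filtered. -/
theorem stmt10 {X : Type*} [TopologicalSpace X] [T0Space X] :
    List.TFAE [OmegaStarWF X,
      @IsOmegaStarDSpace (KSet X) (upperVietoris X),
      @OmegaStarWF (KSet X) (upperVietoris X)] := by
  tfae_have 1 → 3 := one_to_three
  tfae_have 3 → 2 := @wf_to_dspace _ (upperVietoris X)
  tfae_have 2 → 1 := two_to_one
  tfae_finish
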